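/- For any composition L of n ≥ 1, there exists exactly one permutation π ∈ S_n whose descent composition is L and which satisfies ipk(π) = 0 (i.e., π⁻¹ has no peaks). -/

import Mathlib

/-- The one-line notation of a permutation `π` of `{1,…,n}`, read as a function on 0-based
positions: `permWord π j = π_{j+1}` (values are 1-based; out-of-range positions give `0`). -/
def permWord {n : ℕ} (π : Equiv.Perm (Fin n)) (j : ℕ) : ℕ :=
  if h : j < n then ((π ⟨j, h⟩ : Fin n) : ℕ) + 1 else 0

/-- `π` contains `σ` as a consecutive pattern: some window of consecutive letters of `π`
has standardization `σ`, i.e. is order-isomorphic to the one-line word of `σ`. -/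
def ContainsPat {n m : ℕ} (π : Equiv.Perm (Fin n)) (σ : Equiv.Perm (Fin m)) : Prop :=
  ∃ i : ℕ, i + m ≤ n ∧ ∀ j k : Fin m,
    (permWord π (i + (j : ℕ)) < permWord π (i + (k : ℕ)) ↔ permWord σ j < permWord σ k)

/-- The number of peaks of `π`: 1-based indices `i` with `2 ≤ i ≤ n-1` and
`π_{i-1} < π_i > π_{i+1}`. -/
def pkCount {n : ℕ} (π : Equiv.Perm (Fin n)) : ℕ :=
  ((Finset.Icc 2 (n - 1)).filter fun i =>
    permWord π (i - 2) < permWord π (i - 1) ∧ permWord π i < permWord π (i - 1)).card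

/-- The number of left peaks of `π`: 1-based indices `i ∈ [n-1]` that are peaks,
or `i = 1` with `π_1 > π_2`. -/
def lpkCount {n : ℕ} (π : Equiv.Perm (Fin n)) : ℕ :=
  ((Finset.Icc 1 (n - 1)).filter fun i =>
    (2 ≤ i ∧ permWord π (i - 2) < permWord π (i - 1) ∧ permWord π i < permWord π (i - 1))
      ∨ (i = 1 ∧ permWord π 1 < permWord π 0)).card

/-- The number of peaks of `π⁻¹`. -/
def ipk {n : ℕ} (π : Equiv.Perm (Fin n)) : ℕ := pkCount π⁻¹

/-- The number of left peaks of `π⁻¹`. -/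
def ilpk {n : ℕ} (π : Equiv.Perm (Fin n)) : ℕ := lpkCount π⁻¹

/-- The descent set of `π`, as a set of 1-based indices `i ∈ [n-1]` with `π_i > π_{i+1}`. -/
def descSet {n : ℕ} (π : Equiv.Perm (Fin n)) : Finset ℕ :=
  (Finset.Icc 1 (n - 1)).filter fun i => permWord π i < permWord π (i - 1)

/-- `π` has descent composition `L` iff the descent set of `π` consists exactly of the
partial sums `L_1, L_1 + L_2, …, L_1 + ⋯ + L_{k-1}` of `L` (excluding the total sum `n`). -/
def HasDescComp {n : ℕ} (π : Equiv.Perm (Fin n)) (L : Composition n) : Prop :=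
  descSet π = (Finset.range (L.length - 1)).image fun i => L.sizeUpTo (i + 1)

namespace TZ
variable {n : ℕ} (L : Composition n)

lemma sizeUpTo_add_le {a b : ℕ} (hab : a ≤ b) (hb : b ≤ L.length) :
    L.sizeUpTo a + (b - a) ≤ L.sizeUpTo b := by
  induction b with
  | zero => simp [Nat.le_zero.mp hab]
  | succ b ih =>
    rcases Nat.eq_or_lt_of_le hab with rfl | h
    · simp
    · have h1 : a ≤ b := Nat.lt_succ_iff.mp h
      have h3 := ih h1 (by omega)
      have h2 : L.sizeUpTo b < L.sizeUpTo (b + 1) := L.sizeUpTo_strict_mono (by omega)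
      omega

lemma le_sizeUpTo (j : ℕ) (hj : j ≤ L.length) : j ≤ L.sizeUpTo j := by
  have := sizeUpTo_add_le L (Nat.zero_le j) hj
  simpa [Composition.sizeUpTo_zero] using this

lemma sizeUpTo_index_le' (p : Fin n) : L.sizeUpTo (L.index p) ≤ (p : ℕ) :=
  L.sizeUpTo_index_le p

lemma lt_sizeUpTo_index_succ' (p : Fin n) : (p : ℕ) < L.sizeUpTo ((L.index p : ℕ) + 1) := by
  have := L.lt_sizeUpTo_index_succ p
  simpa [Fin.val_succ] using this

lemma index_eq {p : Fin n} {j : ℕ} (hj : j < L.length)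
    (h1 : L.sizeUpTo j ≤ (p : ℕ)) (h2 : (p : ℕ) < L.sizeUpTo (j + 1)) :
    (L.index p : ℕ) = j := by
  rcases lt_trichotomy (L.index p : ℕ) j with h | h | h
  · have := L.monotone_sizeUpTo (show (L.index p : ℕ) + 1 ≤ j by omega)
    have := lt_sizeUpTo_index_succ' L p
    omega
  · exact h
  · have := L.monotone_sizeUpTo (show j + 1 ≤ (L.index p : ℕ) by omega)
    have := sizeUpTo_index_le' L p
    omega

lemma index_mono {q p : Fin n} (h : q ≤ p) : (L.index q : ℕ) ≤ (L.index p : ℕ) := by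
  by_contra hc
  have h1 : (L.index p : ℕ) + 1 ≤ (L.index q : ℕ) := by omega
  have := L.monotone_sizeUpTo h1
  have := sizeUpTo_index_le' L q
  have := lt_sizeUpTo_index_succ' L p
  have : (q : ℕ) ≤ (p : ℕ) := h
  omega

/-- `p` is the first position of its block. -/
def IsStart (p : Fin n) : Prop := (p : ℕ) = L.sizeUpTo (L.index p)

instance (p : Fin n) : Decidable (IsStart L p) := by unfold IsStart; infer_instance

lemma index_le_self (p : Fin n) : (L.index p : ℕ) ≤ (p : ℕ) := by
  have h1 := le_sizeUpTo L (L.index p) (le_of_lt (L.index p).isLt)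
  have := sizeUpTo_index_le' L p
  omega

/-- `p ↦ p - index p` is monotone. -/
lemma sub_index_mono {q p : Fin n} (h : q ≤ p) :
    (q : ℕ) - (L.index q : ℕ) ≤ (p : ℕ) - (L.index p : ℕ) := by
  have him := index_mono L h
  rcases Nat.eq_or_lt_of_le him with he | hlt
  · have := index_le_self L q
    have : (q : ℕ) ≤ (p : ℕ) := h
    omega
  · have h1 : (q : ℕ) < L.sizeUpTo ((L.index q : ℕ) + 1) := lt_sizeUpTo_index_succ' L q
    have h2 := sizeUpTo_add_le L (show (L.index q : ℕ) + 1 ≤ (L.index p : ℕ) from hlt)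
      (le_of_lt (L.index p).isLt)
    have h3 := sizeUpTo_index_le' L p
    have := index_le_self L q
    omega

lemma sub_index_strict_mono {q p : Fin n} (h : q < p) (hp : ¬ IsStart L p) :
    (q : ℕ) - (L.index q : ℕ) < (p : ℕ) - (L.index p : ℕ) := by
  have hple : L.sizeUpTo (L.index p) ≤ (p : ℕ) := sizeUpTo_index_le' L p
  have hpn : L.sizeUpTo (L.index p) < (p : ℕ) := by
    rcases Nat.eq_or_lt_of_le hple with he | hl
    · exact absurd he.symm hp
    · exact hl
  have him := index_mono L (le_of_lt h)
  rcases Nat.eq_or_lt_of_le him with he | hlt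
  · have := index_le_self L q
    have : (q : ℕ) < (p : ℕ) := h
    omega
  · have h1 : (q : ℕ) < L.sizeUpTo ((L.index q : ℕ) + 1) := lt_sizeUpTo_index_succ' L q
    have h2 := sizeUpTo_add_le L (show (L.index q : ℕ) + 1 ≤ (L.index p : ℕ) from hlt)
      (le_of_lt (L.index p).isLt)
    have := index_le_self L q
    omega


lemma length_pos (p : Fin n) : 0 < L.length :=
  L.length_pos_of_pos (Nat.pos_of_ne_zero (by rintro rfl; exact absurd p.isLt (by omega)))

/-- value (0-based) placed by the canonical permutation at position `p`. -/
def fAux (p : Fin n) : ℕ :=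
  if IsStart L p then L.length - 1 - (L.index p : ℕ) else L.length + (p : ℕ) - (L.index p : ℕ) - 1

lemma fAux_start {p : Fin n} (hp : IsStart L p) :
    fAux L p = L.length - 1 - (L.index p : ℕ) := if_pos hp

lemma fAux_nonstart {p : Fin n} (hp : ¬ IsStart L p) :
    fAux L p = L.length + (p : ℕ) - (L.index p : ℕ) - 1 := if_neg hp

lemma fAux_start_lt {p : Fin n} (hp : IsStart L p) : fAux L p < L.length := by
  rw [fAux_start L hp]
  have := length_pos L p
  omega

lemma nonstart_gt {p : Fin n} (hp : ¬ IsStart L p) : L.sizeUpTo (L.index p) < (p : ℕ) := by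
  rcases Nat.eq_or_lt_of_le (sizeUpTo_index_le' L p) with h | h
  · exact absurd h.symm hp
  · exact h

lemma fAux_nonstart_ge {p : Fin n} (hp : ¬ IsStart L p) : L.length ≤ fAux L p := by
  rw [fAux_nonstart L hp]
  have h1 := nonstart_gt L hp
  have h2 := index_le_self L p
  have h3 := le_sizeUpTo L (L.index p) (le_of_lt (L.index p).isLt)
  omega

lemma fAux_lt (p : Fin n) : fAux L p < n := by
  by_cases hp : IsStart L p
  · exact lt_of_lt_of_le (fAux_start_lt L hp) L.length_le
  · rw [fAux_nonstart L hp]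
    have h1 := lt_sizeUpTo_index_succ' L p
    have h2 := sizeUpTo_add_le L (show (L.index p : ℕ) + 1 ≤ L.length from (L.index p).isLt)
      le_rfl
    rw [L.sizeUpTo_length] at h2
    have h3 : (L.index p : ℕ) < L.length := (L.index p).isLt
    omega

lemma fAux_inj : Function.Injective (fun p => (⟨fAux L p, fAux_lt L p⟩ : Fin n)) := by
  intro p q h
  simp only [Fin.mk.injEq] at h
  by_cases hp : IsStart L p <;> by_cases hq : IsStart L q
  · -- both starts
    rw [fAux_start L hp, fAux_start L hq] at h
    have hip : (L.index p : ℕ) < L.length := (L.index p).isLt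
    have hiq : (L.index q : ℕ) < L.length := (L.index q).isLt
    have : (L.index p : ℕ) = (L.index q : ℕ) := by omega
    apply Fin.ext
    rw [hp, hq, this]
  · exact absurd h (by have := fAux_start_lt L hp; have := fAux_nonstart_ge L hq; omega)
  · exact absurd h (by have := fAux_start_lt L hq; have := fAux_nonstart_ge L hp; omega)
  · -- both nonstarts
    rcases lt_trichotomy p q with hlt | he | hlt
    · have := sub_index_strict_mono L hlt hq
      rw [fAux_nonstart L hp, fAux_nonstart L hq] at h
      have := index_le_self L p
      have := index_le_self L q
      omega
    · exact he
    · have := sub_index_strict_mono L hlt hp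
      rw [fAux_nonstart L hp, fAux_nonstart L hq] at h
      have := index_le_self L p
      have := index_le_self L q
      omega

/-- The canonical permutation with descent composition `L` and no inverse peaks. -/
noncomputable def canon : Equiv.Perm (Fin n) :=
  Equiv.ofBijective _ (Finite.injective_iff_bijective.mp (fAux_inj L))

lemma canon_apply (p : Fin n) : (canon L p : ℕ) = fAux L p := rfl

lemma permWord_eq {π : Equiv.Perm (Fin n)} {i : ℕ} (hi : i < n) :
    permWord π i = (π ⟨i, hi⟩ : ℕ) + 1 := dif_pos hi

lemma canon_descent_iff {p q : Fin n} (hpq : (q : ℕ) + 1 = (p : ℕ)) :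
    (fAux L p < fAux L q ↔ IsStart L p) := by
  have hm : 0 < L.length := length_pos L p
  by_cases hp : IsStart L p
  · rw [iff_true_intro hp, iff_true]
    have hjm : (L.index p : ℕ) < L.length := (L.index p).isLt
    have hpj : (p : ℕ) = L.sizeUpTo (L.index p : ℕ) := hp
    have hq0 : L.sizeUpTo 0 = 0 := Composition.sizeUpTo_zero L
    have hj1 : 1 ≤ (L.index p : ℕ) := by
      by_contra hc
      have hc0 : (L.index p : ℕ) = 0 := by omega
      rw [hc0, hq0] at hpj
      omega
    have hstep : L.sizeUpTo ((L.index p : ℕ) - 1) < L.sizeUpTo ((L.index p : ℕ) - 1 + 1) :=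
      L.sizeUpTo_strict_mono (by omega)
    have hstep2 : (L.index p : ℕ) - 1 + 1 = (L.index p : ℕ) := by omega
    rw [hstep2] at hstep
    have hiq : (L.index q : ℕ) = (L.index p : ℕ) - 1 := by
      apply index_eq L (by omega)
      · omega
      · rw [hstep2]; omega
    rw [fAux_start L hp]
    by_cases hq : IsStart L q
    · rw [fAux_start L hq, hiq]; omega
    · have := fAux_nonstart_ge L hq
      omega
  · rw [iff_false_intro hp, iff_false, not_lt]
    have hjm : (L.index p : ℕ) < L.length := (L.index p).isLt
    have hgt : L.sizeUpTo (L.index p : ℕ) < (p : ℕ) := nonstart_gt L hp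
    have hplt : (p : ℕ) < L.sizeUpTo ((L.index p : ℕ) + 1) := lt_sizeUpTo_index_succ' L p
    have hiq : (L.index q : ℕ) = (L.index p : ℕ) := by
      apply index_eq L hjm <;> omega
    have hge := fAux_nonstart_ge L hp
    by_cases hq : IsStart L q
    · have := fAux_start_lt L hq
      omega
    · rw [fAux_nonstart L hp, fAux_nonstart L hq, hiq]
      have := index_le_self L p
      omega

lemma canon_hasDescComp : HasDescComp (canon L) L := by
  unfold HasDescComp descSet
  ext i
  simp only [Finset.mem_filter, Finset.mem_Icc, Finset.mem_image, Finset.mem_range]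
  constructor
  · rintro ⟨⟨hi1, hi2⟩, hdesc⟩
    have h2 : i < n := by omega
    have h3 : i - 1 < n := by omega
    rw [permWord_eq h2, permWord_eq h3, canon_apply, canon_apply] at hdesc
    have hpq : ((⟨i - 1, h3⟩ : Fin n) : ℕ) + 1 = ((⟨i, h2⟩ : Fin n) : ℕ) := by simp; omega
    have hstart : IsStart L ⟨i, h2⟩ := (canon_descent_iff L hpq).mp (by omega)
    have hjm : (L.index (⟨i, h2⟩ : Fin n) : ℕ) < L.length := (L.index (⟨i, h2⟩ : Fin n)).isLt
    have hpj : i = L.sizeUpTo (L.index (⟨i, h2⟩ : Fin n) : ℕ) := hstart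
    have hq0 : L.sizeUpTo 0 = 0 := Composition.sizeUpTo_zero L
    have hj1 : 1 ≤ (L.index (⟨i, h2⟩ : Fin n) : ℕ) := by
      by_contra hc
      have hc0 : (L.index (⟨i, h2⟩ : Fin n) : ℕ) = 0 := by omega
      rw [hc0, hq0] at hpj
      omega
    refine ⟨(L.index (⟨i, h2⟩ : Fin n) : ℕ) - 1, by omega, ?_⟩
    rw [show (L.index (⟨i, h2⟩ : Fin n) : ℕ) - 1 + 1 = (L.index (⟨i, h2⟩ : Fin n) : ℕ) by omega]
    exact hpj.symm
  · rintro ⟨t, ht, rfl⟩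
    have hm : 0 < L.length := by omega
    have htm : t + 1 < L.length := by omega
    have hge : t + 1 ≤ L.sizeUpTo (t + 1) := le_sizeUpTo L _ (by omega)
    have hlt : L.sizeUpTo (t + 1) < L.sizeUpTo (t + 2) := L.sizeUpTo_strict_mono htm
    have hle : L.sizeUpTo (t + 2) ≤ n := L.sizeUpTo_le _
    have h2 : L.sizeUpTo (t + 1) < n := by omega
    have h3 : L.sizeUpTo (t + 1) - 1 < n := by omega
    have hstart : IsStart L ⟨L.sizeUpTo (t + 1), h2⟩ := by
      unfold IsStart
      have : (L.index (⟨L.sizeUpTo (t + 1), h2⟩ : Fin n) : ℕ) = t + 1 :=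
        index_eq L htm (by simp) (by simpa using hlt)
      rw [this]
    refine ⟨⟨by omega, by omega⟩, ?_⟩
    rw [permWord_eq h2, permWord_eq h3, canon_apply, canon_apply]
    have hpq : ((⟨L.sizeUpTo (t + 1) - 1, h3⟩ : Fin n) : ℕ) + 1
        = ((⟨L.sizeUpTo (t + 1), h2⟩ : Fin n) : ℕ) := by simp; omega
    have := (canon_descent_iff L hpq).mpr hstart
    omega

lemma canon_ipk : ipk (canon L) = 0 := by
  unfold ipk pkCount
  rw [Finset.card_eq_zero, Finset.filter_eq_empty_iff]
  intro i hi
  rw [Finset.mem_Icc] at hi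
  obtain ⟨hi2, hi1⟩ := hi
  have h0 : i < n := by omega
  have h1 : i - 1 < n := by omega
  have h2 : i - 2 < n := by omega
  rintro ⟨hA, hB⟩
  rw [permWord_eq h2, permWord_eq h1] at hA
  rw [permWord_eq h0, permWord_eq h1] at hB
  have hf2 : fAux L ((canon L)⁻¹ ⟨i - 2, h2⟩) = i - 2 := by
    rw [← canon_apply, Equiv.Perm.inv_def, Equiv.apply_symm_apply]
  have hf1 : fAux L ((canon L)⁻¹ ⟨i - 1, h1⟩) = i - 1 := by
    rw [← canon_apply, Equiv.Perm.inv_def, Equiv.apply_symm_apply]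
  have hf0 : fAux L ((canon L)⁻¹ ⟨i, h0⟩) = i := by
    rw [← canon_apply, Equiv.Perm.inv_def, Equiv.apply_symm_apply]
  set p2 : Fin n := (canon L)⁻¹ ⟨i - 2, h2⟩ with hp2
  set p1 : Fin n := (canon L)⁻¹ ⟨i - 1, h1⟩ with hp1
  set p0 : Fin n := (canon L)⁻¹ ⟨i, h0⟩ with hp0
  have hA' : (p2 : ℕ) < (p1 : ℕ) := by omega
  have hB' : (p0 : ℕ) < (p1 : ℕ) := by omega
  have hm : 0 < L.length := length_pos L p1
  by_cases hc : i - 1 < L.length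
  · have hs1 : IsStart L p1 := by
      by_contra hq; have := fAux_nonstart_ge L hq; omega
    have hs2 : IsStart L p2 := by
      by_contra hq; have := fAux_nonstart_ge L hq; omega
    rw [fAux_start L hs1] at hf1
    rw [fAux_start L hs2] at hf2
    have hj1 : (L.index p1 : ℕ) < L.length := (L.index p1).isLt
    have hj2 : (L.index p2 : ℕ) < L.length := (L.index p2).isLt
    have hidx : (L.index p2 : ℕ) = (L.index p1 : ℕ) + 1 := by omega
    have hstep : L.sizeUpTo (L.index p1 : ℕ) < L.sizeUpTo ((L.index p1 : ℕ) + 1) :=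
      L.sizeUpTo_strict_mono hj1
    have e1 : (p1 : ℕ) = L.sizeUpTo (L.index p1 : ℕ) := hs1
    have e2 : (p2 : ℕ) = L.sizeUpTo (L.index p2 : ℕ) := hs2
    rw [hidx] at e2
    omega
  · have hs1 : ¬ IsStart L p1 := by
      intro hq; have := fAux_start_lt L hq; omega
    have hs0 : ¬ IsStart L p0 := by
      intro hq; have := fAux_start_lt L hq; omega
    have hmono := sub_index_strict_mono L (show p0 < p1 from hB') hs1
    rw [fAux_nonstart L hs1] at hf1
    rw [fAux_nonstart L hs0] at hf0
    have := index_le_self L p0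
    have := index_le_self L p1
    omega

section Uniqueness

variable {π : Equiv.Perm (Fin n)}

lemma posN_pos {v : ℕ} (hv : v < n) : 1 ≤ permWord π⁻¹ v := by
  rw [permWord_eq hv]; omega

lemma posN_inj {v w : ℕ} (hv : v < n) (hw : w < n)
    (h : permWord π⁻¹ v = permWord π⁻¹ w) : v = w := by
  rw [permWord_eq hv, permWord_eq hw] at h
  have h2 : (π⁻¹ ⟨v, hv⟩ : Fin n) = π⁻¹ ⟨w, hw⟩ := Fin.ext (by omega)
  have := (Equiv.injective π⁻¹) h2
  exact congrArg Fin.val this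

lemma posN_apply (p : Fin n) : permWord π⁻¹ ((π p : Fin n) : ℕ) = (p : ℕ) + 1 := by
  rw [permWord_eq (π p).isLt]
  congr 1
  rw [Fin.eta, Equiv.Perm.inv_def, Equiv.symm_apply_apply]

/-- the (0-based) value at the first position. -/
def kval (hn : 0 < n) (π : Equiv.Perm (Fin n)) : ℕ := (π ⟨0, hn⟩ : ℕ)

lemma kval_lt (hn : 0 < n) : kval hn π < n := (π ⟨0, hn⟩).isLt

lemma posN_kval (hn : 0 < n) : permWord π⁻¹ (kval hn π) = 1 := posN_apply ⟨0, hn⟩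

lemma noPeak (h2 : ipk π = 0) {v : ℕ} (hv1 : 1 ≤ v) (hv2 : v + 1 < n) :
    ¬(permWord π⁻¹ (v - 1) < permWord π⁻¹ v ∧ permWord π⁻¹ (v + 1) < permWord π⁻¹ v) := by
  unfold ipk pkCount at h2
  rw [Finset.card_eq_zero, Finset.filter_eq_empty_iff] at h2
  have := h2 (show v + 1 ∈ Finset.Icc 2 (n - 1) by rw [Finset.mem_Icc]; omega)
  rwa [show v + 1 - 2 = v - 1 by omega, show v + 1 - 1 = v by omega] at this

lemma ascend_step (h2 : ipk π = 0) (hn : 0 < n) :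
    ∀ v, kval hn π ≤ v → v + 1 < n → permWord π⁻¹ v < permWord π⁻¹ (v + 1) := by
  intro v hv
  induction v, hv using Nat.le_induction with
  | base =>
    intro h
    rw [posN_kval hn]
    have h1 : 1 ≤ permWord π⁻¹ (kval hn π + 1) := posN_pos (by omega)
    have h3 : permWord π⁻¹ (kval hn π + 1) ≠ 1 := by
      intro hc
      have := posN_inj (show kval hn π + 1 < n by omega) (kval_lt hn)
        (hc.trans (posN_kval hn).symm)
      omega
    omega
  | succ v hv ih =>
    intro h
    have hP : permWord π⁻¹ v < permWord π⁻¹ (v + 1) := ih (by omega)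
    have hnp := noPeak h2 (show 1 ≤ v + 1 by omega) (show v + 1 + 1 < n from h)
    rw [show v + 1 - 1 = v by omega] at hnp
    have hne : permWord π⁻¹ (v + 1 + 1) ≠ permWord π⁻¹ (v + 1) := fun hc =>
      by have := posN_inj (show v + 1 + 1 < n by omega) (show v + 1 < n by omega) hc; omega
    omega

lemma ascend (h2 : ipk π = 0) (hn : 0 < n) {u w : ℕ} (hu : kval hn π ≤ u) (huw : u < w)
    (hw : w < n) : permWord π⁻¹ u < permWord π⁻¹ w := by
  induction w, huw using Nat.le_induction with
  | base => exact ascend_step h2 hn u hu hw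
  | succ w hw' ih =>
    exact lt_trans (ih (by omega)) (ascend_step h2 hn w (by omega) hw)

lemma descend_step (h2 : ipk π = 0) (hn : 0 < n) :
    ∀ d v, v < kval hn π → kval hn π - v = d + 1 → permWord π⁻¹ (v + 1) < permWord π⁻¹ v := by
  intro d
  induction d with
  | zero =>
    intro v hv hd
    have hveq : v + 1 = kval hn π := by omega
    rw [hveq, posN_kval hn]
    have hvn : v < n := by have := kval_lt (π := π) hn; omega
    have h1 : 1 ≤ permWord π⁻¹ v := posN_pos hvn
    have h3 : permWord π⁻¹ v ≠ 1 := by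
      intro hc
      have := posN_inj hvn (kval_lt hn) (hc.trans (posN_kval hn).symm)
      omega
    omega
  | succ d ih =>
    intro v hv hd
    have hknn := kval_lt (π := π) hn
    have ih' := ih (v + 1) (by omega) (by omega)
    by_contra hc
    have hne : permWord π⁻¹ v ≠ permWord π⁻¹ (v + 1) := fun h =>
      by have := posN_inj (show v < n by omega) (show v + 1 < n by omega) h; omega
    have hlt : permWord π⁻¹ v < permWord π⁻¹ (v + 1) := by omega
    have hnp := noPeak h2 (show 1 ≤ v + 1 by omega) (show v + 1 + 1 < n by omega)
    rw [show v + 1 - 1 = v by omega] at hnp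
    exact hnp ⟨hlt, ih'⟩

lemma descend (h2 : ipk π = 0) (hn : 0 < n) {u w : ℕ} (huw : u < w) (hw : w ≤ kval hn π) :
    permWord π⁻¹ w < permWord π⁻¹ u := by
  induction w, huw using Nat.le_induction with
  | base => exact descend_step h2 hn (kval hn π - u - 1) u (by omega) (by omega)
  | succ w hw' ih =>
    exact lt_trans (descend_step h2 hn (kval hn π - w - 1) w (by omega) (by omega))
      (ih (by omega))

lemma descent_iff (h2 : ipk π = 0) (hn : 0 < n) {i : ℕ} (hi1 : 1 ≤ i) (hi2 : i < n) :
    (permWord π i < permWord π (i - 1) ↔ (π ⟨i, hi2⟩ : ℕ) < kval hn π) := by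
  have hi3 : i - 1 < n := by omega
  rw [permWord_eq hi2, permWord_eq hi3]
  have hb : permWord π⁻¹ ((π ⟨i, hi2⟩ : Fin n) : ℕ) = i + 1 := posN_apply _
  have ha : permWord π⁻¹ ((π ⟨i - 1, hi3⟩ : Fin n) : ℕ) = (i - 1) + 1 := posN_apply _
  constructor
  · intro hdesc
    by_contra hc
    push_neg at hc
    have := ascend h2 hn hc (show (π ⟨i, hi2⟩ : ℕ) < (π ⟨i - 1, hi3⟩ : ℕ) by omega)
      (π ⟨i - 1, hi3⟩).isLt
    omega
  · intro hlt
    have hne : (π ⟨i - 1, hi3⟩ : ℕ) ≠ (π ⟨i, hi2⟩ : ℕ) := by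
      intro hc
      have h4 : (⟨i - 1, hi3⟩ : Fin n) = ⟨i, hi2⟩ := Equiv.injective π (Fin.ext hc)
      have h5 := congrArg Fin.val h4
      simp only [Fin.val_mk] at h5
      omega
    by_contra hc
    have hab : (π ⟨i - 1, hi3⟩ : ℕ) < (π ⟨i, hi2⟩ : ℕ) := by omega
    have := descend h2 hn hab (show (π ⟨i, hi2⟩ : ℕ) ≤ kval hn π by omega)
    omega

lemma descSet_eq (h2 : ipk π = 0) (hn : 0 < n) :
    descSet π = (Finset.range (kval hn π)).image (fun v => permWord π⁻¹ v - 1) := by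
  unfold descSet
  ext i
  simp only [Finset.mem_filter, Finset.mem_Icc, Finset.mem_image, Finset.mem_range]
  constructor
  · rintro ⟨⟨hi1, hi2⟩, hdesc⟩
    have hlt : i < n := by omega
    have hb := (descent_iff h2 hn hi1 hlt).mp hdesc
    refine ⟨(π ⟨i, hlt⟩ : ℕ), hb, ?_⟩
    rw [posN_apply]
    simp
  · rintro ⟨v, hv, rfl⟩
    have hvn : v < n := lt_trans hv (kval_lt hn)
    have hi : permWord π⁻¹ v - 1 = (π⁻¹ ⟨v, hvn⟩ : ℕ) := by rw [permWord_eq hvn]; omega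
    have hlt : permWord π⁻¹ v - 1 < n := by rw [hi]; exact (π⁻¹ ⟨v, hvn⟩).isLt
    have hi1 : 1 ≤ permWord π⁻¹ v - 1 := by
      by_contra hc
      have h0 : (π⁻¹ ⟨v, hvn⟩ : ℕ) = 0 := by omega
      have h4 : (π⁻¹ ⟨v, hvn⟩ : Fin n) = ⟨0, hn⟩ := Fin.ext h0
      have h5 : (⟨v, hvn⟩ : Fin n) = π ⟨0, hn⟩ := by
        rw [← h4, Equiv.Perm.inv_def, Equiv.apply_symm_apply]
      have := congrArg Fin.val h5
      simp only [Fin.val_mk] at this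
      unfold kval at hv
      omega
    refine ⟨⟨hi1, by omega⟩, ?_⟩
    apply (descent_iff h2 hn hi1 hlt).mpr
    have h4 : (⟨permWord π⁻¹ v - 1, hlt⟩ : Fin n) = π⁻¹ ⟨v, hvn⟩ := Fin.ext hi
    rw [h4, Equiv.Perm.inv_def, Equiv.apply_symm_apply]
    exact hv

lemma sizeUpTo_lt {a b : ℕ} (h : a < b) (hb : b ≤ L.length) :
    L.sizeUpTo a < L.sizeUpTo b := by
  have h1 := L.sizeUpTo_strict_mono (show a < L.length by omega)
  have h2 := L.monotone_sizeUpTo (show a + 1 ≤ b from h)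
  omega

lemma card_D : ((Finset.range (L.length - 1)).image fun i => L.sizeUpTo (i + 1)).card
    = L.length - 1 := by
  rw [Finset.card_image_of_injOn, Finset.card_range]
  intro a ha b hb hab
  simp only [Finset.coe_range, Set.mem_Iio] at ha hb
  have hab' : L.sizeUpTo (a + 1) = L.sizeUpTo (b + 1) := hab
  by_contra hne
  rcases lt_or_gt_of_ne hne with h | h
  · have := sizeUpTo_lt L (show a + 1 < b + 1 by omega) (by omega)
    omega
  · have := sizeUpTo_lt L (show b + 1 < a + 1 by omega) (by omega)
    omega

lemma card_descSet (h2 : ipk π = 0) (hn : 0 < n) : (descSet π).card = kval hn π := by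
  rw [descSet_eq h2 hn, Finset.card_image_of_injOn, Finset.card_range]
  intro a ha b hb hab
  simp only [Finset.coe_range, Set.mem_Iio] at ha hb
  have han : a < n := lt_trans ha (kval_lt hn)
  have hbn : b < n := lt_trans hb (kval_lt hn)
  have hab' : permWord π⁻¹ a - 1 = permWord π⁻¹ b - 1 := hab
  have h1 := posN_pos (π := π) han
  have h2' := posN_pos (π := π) hbn
  exact posN_inj (π := π) han hbn (by omega)

lemma kval_eq (h1 : HasDescComp π L) (h2 : ipk π = 0) (hn : 0 < n) :
    kval hn π + 1 = L.length := by
  have hm : 0 < L.length := length_pos L ⟨0, hn⟩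
  have hc1 := card_descSet h2 hn
  rw [h1, card_D] at hc1
  omega

lemma unique_aux (hn : 0 < n) (π π' : Equiv.Perm (Fin n))
    (h1 : HasDescComp π L) (h2 : ipk π = 0)
    (h1' : HasDescComp π' L) (h2' : ipk π' = 0) : π = π' := by
  have hm : 0 < L.length := length_pos L ⟨0, hn⟩
  have hmn : L.length ≤ n := L.length_le
  have hk : kval hn π + 1 = L.length := kval_eq L h1 h2 hn
  have hk' : kval hn π' + 1 = L.length := kval_eq L h1' h2' hn
  set D : Finset ℕ := (Finset.range (L.length - 1)).image (fun i => L.sizeUpTo (i + 1))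
    with hD_def
  have hDcard : D.card = L.length - 1 := card_D L
  have hDsub : D ⊆ Finset.range n := by
    intro i hi
    rw [hD_def, Finset.mem_image] at hi
    obtain ⟨t, ht, rfl⟩ := hi
    rw [Finset.mem_range] at ht ⊢
    have := sizeUpTo_lt L (show t + 1 < t + 2 by omega) (by omega)
    have := L.sizeUpTo_le (t + 2)
    omega
  set C : Finset ℕ := (Finset.range n) \ D with hC_def
  have hCcard : C.card = n - (L.length - 1) := by
    rw [hC_def, Finset.card_sdiff_of_subset hDsub, Finset.card_range, hDcard]
  -- the small (descent bottom) values are pinned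
  have pin_small : ∀ (σ : Equiv.Perm (Fin n)), HasDescComp σ L → ipk σ = 0 →
      (fun j : Fin (L.length - 1) => permWord σ⁻¹ (L.length - 2 - (j : ℕ)) - 1)
        = D.orderEmbOfFin hDcard := by
    intro σ hσ1 hσ2
    have hkσ : kval hn σ + 1 = L.length := kval_eq L hσ1 hσ2 hn
    apply Finset.orderEmbOfFin_unique hDcard
    · intro j
      have hj : (j : ℕ) < L.length - 1 := j.isLt
      have hv : L.length - 2 - (j : ℕ) < kval hn σ := by omega
      rw [hD_def, ← hσ1, descSet_eq hσ2 hn]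
      exact Finset.mem_image_of_mem _ (Finset.mem_range.mpr hv)
    · intro j j' hjj
      have hj : (j : ℕ) < L.length - 1 := j.isLt
      have hj' : (j' : ℕ) < L.length - 1 := j'.isLt
      have hjlt : (j : ℕ) < (j' : ℕ) := hjj
      have hw : L.length - 2 - (j' : ℕ) < L.length - 2 - (j : ℕ) := by omega
      have hle : L.length - 2 - (j : ℕ) ≤ kval hn σ := by omega
      have hdes := descend hσ2 hn hw hle
      have hp1 := posN_pos (π := σ) (show L.length - 2 - (j : ℕ) < n by omega)
      have hp2 := posN_pos (π := σ) (show L.length - 2 - (j' : ℕ) < n by omega)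
      simp only []
      omega
  -- the big (increasing) values are pinned
  have pin_big : ∀ (σ : Equiv.Perm (Fin n)), HasDescComp σ L → ipk σ = 0 →
      (fun t : Fin (n - (L.length - 1)) => permWord σ⁻¹ (L.length - 1 + (t : ℕ)) - 1)
        = C.orderEmbOfFin hCcard := by
    intro σ hσ1 hσ2
    have hkσ : kval hn σ + 1 = L.length := kval_eq L hσ1 hσ2 hn
    apply Finset.orderEmbOfFin_unique hCcard
    · intro t
      have ht : (t : ℕ) < n - (L.length - 1) := t.isLt
      have hvn : L.length - 1 + (t : ℕ) < n := by omega
      rw [hC_def, Finset.mem_sdiff]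
      constructor
      · rw [Finset.mem_range, permWord_eq hvn]
        have := (σ⁻¹ ⟨L.length - 1 + (t : ℕ), hvn⟩).isLt
        omega
      · rw [hD_def, ← hσ1, descSet_eq hσ2 hn]
        intro hmem
        rw [Finset.mem_image] at hmem
        obtain ⟨w, hw, hweq⟩ := hmem
        rw [Finset.mem_range] at hw
        have hwn : w < n := by omega
        have hq1 := posN_pos (π := σ) hwn
        have hq2 := posN_pos (π := σ) hvn
        have := posN_inj (π := σ) hwn hvn (by omega)
        omega
    · intro t t' htt
      have ht : (t : ℕ) < n - (L.length - 1) := t.isLt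
      have ht' : (t' : ℕ) < n - (L.length - 1) := t'.isLt
      have htlt : (t : ℕ) < (t' : ℕ) := htt
      have hasc := ascend hσ2 hn (show kval hn σ ≤ L.length - 1 + (t : ℕ) by omega)
        (show L.length - 1 + (t : ℕ) < L.length - 1 + (t' : ℕ) by omega)
        (show L.length - 1 + (t' : ℕ) < n by omega)
      have hp1 := posN_pos (π := σ) (show L.length - 1 + (t : ℕ) < n by omega)
      simp only []
      omega
  -- conclude that the inverses agree
  have key : ∀ v : Fin n, permWord π⁻¹ (v : ℕ) = permWord π'⁻¹ (v : ℕ) := by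
    intro v
    rcases lt_trichotomy (v : ℕ) (L.length - 1) with h | h | h
    · have hj : L.length - 2 - (L.length - 2 - (v : ℕ)) = (v : ℕ) := by omega
      have e1 := congrFun ((pin_small π h1 h2).trans (pin_small π' h1' h2').symm)
        ⟨L.length - 2 - (v : ℕ), by omega⟩
      simp only [Fin.val_mk] at e1
      rw [hj] at e1
      have hp1 := posN_pos (π := π) (show (v : ℕ) < n from v.isLt)
      have hp2 := posN_pos (π := π') (show (v : ℕ) < n from v.isLt)
      omega
    · have e1 : permWord π⁻¹ (v : ℕ) = 1 := by
        rw [show (v : ℕ) = kval hn π by omega]; exact posN_kval hn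
      have e2 : permWord π'⁻¹ (v : ℕ) = 1 := by
        rw [show (v : ℕ) = kval hn π' by omega]; exact posN_kval hn
      rw [e1, e2]
    · have hj : L.length - 1 + ((v : ℕ) - (L.length - 1)) = (v : ℕ) := by omega
      have e1 := congrFun ((pin_big π h1 h2).trans (pin_big π' h1' h2').symm)
        ⟨(v : ℕ) - (L.length - 1), by have := v.isLt; omega⟩
      simp only [Fin.val_mk] at e1
      rw [hj] at e1
      have hp1 := posN_pos (π := π) (show (v : ℕ) < n from v.isLt)
      have hp2 := posN_pos (π := π') (show (v : ℕ) < n from v.isLt)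
      omega
  have hinv : π⁻¹ = π'⁻¹ := by
    apply Equiv.ext
    intro v
    have k := key v
    rw [permWord_eq v.isLt, permWord_eq v.isLt] at k
    have : (π⁻¹ ⟨(v : ℕ), v.isLt⟩ : ℕ) = (π'⁻¹ ⟨(v : ℕ), v.isLt⟩ : ℕ) := by omega
    have h5 : π⁻¹ ⟨(v : ℕ), v.isLt⟩ = π'⁻¹ ⟨(v : ℕ), v.isLt⟩ := Fin.ext this
    simpa [Fin.eta] using h5
  exact inv_injective hinv

end Uniqueness

end TZ

/-- **Theorem 5 (Troyka–Zhuang).** For any composition `L` of `n ≥ 1`, there is exactly one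
permutation in `S_n` with descent composition `L` whose inverse has no peaks. -/

theorem stmt3 (n : ℕ) (hn : 1 ≤ n) (L : Composition n) :
    ∃! π : Equiv.Perm (Fin n), HasDescComp π L ∧ ipk π = 0 := by
  refine ⟨TZ.canon L, ⟨TZ.canon_hasDescComp L, TZ.canon_ipk L⟩, ?_⟩
  rintro π ⟨h1, h2⟩
  exact TZ.unique_aux L (show 0 < n from hn) π (TZ.canon L) h1 h2
    (TZ.canon_hasDescComp L) (TZ.canon_ipk L)
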